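/- Let a,b,c ∈ ℂ with a²,b²,c² pairwise distinct and X_{a,b,c} smooth. Let N := ℚ(a,b,c) and L := ℚ(j₁(a,b,c), j₂(a,b,c), j₃(a,b,c)), subfields of ℂ. Assume i ∈ N, assume the extension N/L is Galois, and assume that for every field automorphism σ of N fixing L pointwise the triple (σ(a),σ(b),σ(c)) is a permutation of (a,b,c). Then there exist a homogeneous degree-4 polynomial Q with all coefficients in L and a matrix A ∈ GL₃(N) whose projective action maps X_{a,b,c} onto the zero locus of Q in ℙ²(ℂ). -/

import Mathlib

open MvPolynomial Matrix Complex

noncomputable section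

/-- The quartic polynomial F_{a,b,c}. -/
def quarticF (a b c : ℂ) : MvPolynomial (Fin 3) ℂ :=
  X 0 ^ 4 + X 1 ^ 4 + X 2 ^ 4 + C a * X 0 ^ 2 * X 1 ^ 2 +
    C b * X 0 ^ 2 * X 2 ^ 2 + C c * X 1 ^ 2 * X 2 ^ 2

/-- Smoothness of a plane curve. -/
def IsSmoothPlaneCurve (P : MvPolynomial (Fin 3) ℂ) : Prop :=
  ¬ ∃ v : Fin 3 → ℂ, v ≠ 0 ∧ eval v P = 0 ∧ ∀ i : Fin 3, eval v (pderiv i P) = 0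

/-- The zero locus in ℙ²(ℂ). -/
def zeroLocus (P : MvPolynomial (Fin 3) ℂ) : Set (Projectivization ℂ (Fin 3 → ℂ)) :=
  {p | eval p.rep P = 0}

/-- The projective action of an invertible matrix on ℙ²(ℂ). -/
def projAction (A : GL (Fin 3) ℂ) (p : Projectivization ℂ (Fin 3 → ℂ)) :
    Projectivization ℂ (Fin 3 → ℂ) :=
  Projectivization.mk ℂ ((A : Matrix (Fin 3) (Fin 3) ℂ) *ᵥ p.rep) (by
    intro h
    apply p.rep_nonzero
    have h2 := congrArg (fun w => ((A⁻¹ : GL (Fin 3) ℂ) : Matrix (Fin 3) (Fin 3) ℂ) *ᵥ w) h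
    simp only [Matrix.mulVec_mulVec] at h2
    have h3 : ((A⁻¹ : GL (Fin 3) ℂ) : Matrix (Fin 3) (Fin 3) ℂ) *
        ((A : GL (Fin 3) ℂ) : Matrix (Fin 3) (Fin 3) ℂ) = 1 := by
      exact_mod_cast A.inv_mul
    rw [h3] at h2
    simpa using h2)

/-- `A` maps `S` bijectively onto `T` via its projective action. -/
def MapsOnto (A : GL (Fin 3) ℂ)
    (S T : Set (Projectivization ℂ (Fin 3 → ℂ))) : Prop :=
  Set.BijOn (projAction A) S T

section AuxST6

variable {R S : Type*} [CommSemiring R] [CommSemiring S]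

def linSub (M : Matrix (Fin 3) (Fin 3) R) (P : MvPolynomial (Fin 3) R) : MvPolynomial (Fin 3) R :=
  bind₁ (fun i => ∑ j, C (M i j) * X j) P

lemma eval_linSub (M : Matrix (Fin 3) (Fin 3) R) (P : MvPolynomial (Fin 3) R) (v : Fin 3 → R) :
    eval v (linSub M P) = eval (M *ᵥ v) P := by
  have h1 : eval v = ⇑(aeval (R := R) v) := rfl
  have h2 : eval (M *ᵥ v) = ⇑(aeval (R := R) (M *ᵥ v)) := rfl
  rw [linSub, h1, h2]
  rw [aeval_bind₁]
  have : (fun i => aeval (R := R) v (∑ j, C (M i j) * X j)) = M *ᵥ v := by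
    funext i
    simp [mulVec, dotProduct]
  rw [this]

lemma linSub_linSub (M M' : Matrix (Fin 3) (Fin 3) R) (P : MvPolynomial (Fin 3) R) :
    linSub M (linSub M' P) = linSub (M' * M) P := by
  rw [linSub, linSub, linSub, bind₁_bind₁]
  have : (fun i => bind₁ (fun i' => ∑ j, C (M i' j) * X j) (∑ j, C (M' i j) * X j))
      = (fun i => ∑ j, C ((M' * M) i j) * (X j : MvPolynomial (Fin 3) R)) := by
    funext i
    simp only [map_sum, _root_.map_mul, bind₁_X_right, algHom_C, Finset.mul_sum]
    rw [Finset.sum_comm]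
    refine Finset.sum_congr rfl fun k _ => ?_
    rw [Matrix.mul_apply, map_sum, Finset.sum_mul]
    refine Finset.sum_congr rfl fun j _ => ?_
    rw [C_mul, algebraMap_eq]
    ring
  rw [this]

lemma map_linSub (f : R →+* S) (M : Matrix (Fin 3) (Fin 3) R) (P : MvPolynomial (Fin 3) R) :
    map f (linSub M P) = linSub (M.map f) (map f P) := by
  rw [linSub, linSub, map_bind₁]
  have : (fun i => map f (∑ j, C (M i j) * X j))
      = (fun i => ∑ j, C (M.map f i j) * (X j : MvPolynomial (Fin 3) S)) := by
    funext i
    simp [map_sum]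
  rw [this]

lemma linSub_isHomogeneous {M : Matrix (Fin 3) (Fin 3) R} {P : MvPolynomial (Fin 3) R} {n : ℕ}
    (h : P.IsHomogeneous n) : (linSub M P).IsHomogeneous n := by
  have := h.aeval (n := 1) (fun i => ∑ j, C (M i j) * X j) (fun i => ?_)
  · simpa [linSub] using this
  · apply MvPolynomial.IsHomogeneous.sum
    intro j _
    exact isHomogeneous_C_mul_X _ _

lemma eval_smul_of_isHomogeneous {P : MvPolynomial (Fin 3) R} {n : ℕ}
    (h : P.IsHomogeneous n) (u : R) (v : Fin 3 → R) :
    eval (u • v) P = u ^ n * eval v P := by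
  rw [eval_eq, eval_eq, Finset.mul_sum]
  apply Finset.sum_congr rfl
  intro d hd
  have hdeg : ∑ i ∈ d.support, d i = n := by
    have := h (mem_support_iff.mp hd)
    simpa [Finsupp.weight_apply, Finsupp.sum] using this
  simp only [Pi.smul_apply, smul_eq_mul, mul_pow]
  rw [Finset.prod_mul_distrib, Finset.prod_pow_eq_pow_sum, hdeg]
  ring

def FF (p q r : R) : MvPolynomial (Fin 3) R :=
  X 0 ^ 4 + X 1 ^ 4 + X 2 ^ 4 + C p * X 0 ^ 2 * X 1 ^ 2 +
    C q * X 0 ^ 2 * X 2 ^ 2 + C r * X 1 ^ 2 * X 2 ^ 2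

lemma map_FF (f : R →+* S) (p q r : R) : map f (FF p q r) = FF (f p) (f q) (f r) := by
  simp [FF, _root_.map_add, _root_.map_mul, map_pow, map_C, map_X]

lemma FF_isHomogeneous (p q r : R) : (FF p q r).IsHomogeneous 4 := by
  have hX : ∀ (i : Fin 3), (X i ^ 4 : MvPolynomial (Fin 3) R).IsHomogeneous 4 := by
    intro i; simpa using isHomogeneous_X_pow (R := R) i 4
  have hM : ∀ (s : R) (i j : Fin 3),
      (C s * X i ^ 2 * X j ^ 2 : MvPolynomial (Fin 3) R).IsHomogeneous 4 := by
    intro s i j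
    have := ((isHomogeneous_C _ s).mul (isHomogeneous_X_pow (R := R) i 2)).mul
      (isHomogeneous_X_pow (R := R) j 2)
    simpa using this
  exact ((((hX 0).add (hX 1)).add (hX 2)).add (hM p 0 1)).add (hM q 0 2) |>.add (hM r 1 2)

def AV (p q r : R) : Matrix (Fin 3) (Fin 3) R :=
  ![![1, 1, 1], ![r, q, p], ![r ^ 2, q ^ 2, p ^ 2]]

lemma map_AV (f : R →+* S) (p q r : R) : (AV p q r).map f = AV (f p) (f q) (f r) := by
  ext i j
  fin_cases i <;> fin_cases j <;> simp [map_pow] <;> simp [AV]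

section PermCases

variable (p q r : R)

lemma linSub_Mid : linSub (!![1,0,0; 0,1,0; 0,0,1] : Matrix (Fin 3) (Fin 3) R) (FF p q r) = FF p q r := by
  simp only [linSub, FF, _root_.map_add, _root_.map_mul, map_pow, bind₁_X_right, algHom_C,
    Fin.sum_univ_three, Matrix.cons_val_zero, Matrix.cons_val_one, Matrix.head_cons,
    Matrix.cons_val_two, Matrix.tail_cons, _root_.map_one, map_zero, one_mul, zero_mul,
    add_zero, zero_add, algebraMap_eq, C_1, Matrix.of_apply]
  try ring

lemma linSub_M01 : linSub (!![0,1,0; 1,0,0; 0,0,1] : Matrix (Fin 3) (Fin 3) R) (FF p q r) = FF p r q := by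
  simp only [linSub, FF, _root_.map_add, _root_.map_mul, map_pow, bind₁_X_right, algHom_C,
    Fin.sum_univ_three, Matrix.cons_val_zero, Matrix.cons_val_one, Matrix.head_cons,
    Matrix.cons_val_two, Matrix.tail_cons, _root_.map_one, map_zero, one_mul, zero_mul,
    add_zero, zero_add, algebraMap_eq, C_1, Matrix.of_apply]
  try ring

lemma linSub_M02 : linSub (!![0,0,1; 0,1,0; 1,0,0] : Matrix (Fin 3) (Fin 3) R) (FF p q r) = FF r q p := by
  simp only [linSub, FF, _root_.map_add, _root_.map_mul, map_pow, bind₁_X_right, algHom_C,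
    Fin.sum_univ_three, Matrix.cons_val_zero, Matrix.cons_val_one, Matrix.head_cons,
    Matrix.cons_val_two, Matrix.tail_cons, _root_.map_one, map_zero, one_mul, zero_mul,
    add_zero, zero_add, algebraMap_eq, C_1, Matrix.of_apply]
  try ring

lemma linSub_M12 : linSub (!![1,0,0; 0,0,1; 0,1,0] : Matrix (Fin 3) (Fin 3) R) (FF p q r) = FF q p r := by
  simp only [linSub, FF, _root_.map_add, _root_.map_mul, map_pow, bind₁_X_right, algHom_C,
    Fin.sum_univ_three, Matrix.cons_val_zero, Matrix.cons_val_one, Matrix.head_cons,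
    Matrix.cons_val_two, Matrix.tail_cons, _root_.map_one, map_zero, one_mul, zero_mul,
    add_zero, zero_add, algebraMap_eq, C_1, Matrix.of_apply]
  try ring

lemma linSub_Mc1 : linSub (!![0,1,0; 0,0,1; 1,0,0] : Matrix (Fin 3) (Fin 3) R) (FF p q r) = FF q r p := by
  simp only [linSub, FF, _root_.map_add, _root_.map_mul, map_pow, bind₁_X_right, algHom_C,
    Fin.sum_univ_three, Matrix.cons_val_zero, Matrix.cons_val_one, Matrix.head_cons,
    Matrix.cons_val_two, Matrix.tail_cons, _root_.map_one, map_zero, one_mul, zero_mul,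
    add_zero, zero_add, algebraMap_eq, C_1, Matrix.of_apply]
  try ring

lemma linSub_Mc2 : linSub (!![0,0,1; 1,0,0; 0,1,0] : Matrix (Fin 3) (Fin 3) R) (FF p q r) = FF r p q := by
  simp only [linSub, FF, _root_.map_add, _root_.map_mul, map_pow, bind₁_X_right, algHom_C,
    Fin.sum_univ_three, Matrix.cons_val_zero, Matrix.cons_val_one, Matrix.head_cons,
    Matrix.cons_val_two, Matrix.tail_cons, _root_.map_one, map_zero, one_mul, zero_mul,
    add_zero, zero_add, algebraMap_eq, C_1, Matrix.of_apply]
  try ring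

lemma AV_mul_Mid : AV p q r * (!![1,0,0; 0,1,0; 0,0,1] : Matrix (Fin 3) (Fin 3) R) = AV p q r := by
  ext i j
  fin_cases i <;> fin_cases j <;>
    simp [Matrix.mul_apply, Fin.sum_univ_three, Matrix.vecHead, Matrix.vecTail] <;> simp [AV]

lemma AV_mul_M01 : AV p q r * (!![0,1,0; 1,0,0; 0,0,1] : Matrix (Fin 3) (Fin 3) R) = AV p r q := by
  ext i j
  fin_cases i <;> fin_cases j <;>
    simp [Matrix.mul_apply, Fin.sum_univ_three, Matrix.vecHead, Matrix.vecTail] <;> simp [AV]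

lemma AV_mul_M02 : AV p q r * (!![0,0,1; 0,1,0; 1,0,0] : Matrix (Fin 3) (Fin 3) R) = AV r q p := by
  ext i j
  fin_cases i <;> fin_cases j <;>
    simp [Matrix.mul_apply, Fin.sum_univ_three, Matrix.vecHead, Matrix.vecTail] <;> simp [AV]

lemma AV_mul_M12 : AV p q r * (!![1,0,0; 0,0,1; 0,1,0] : Matrix (Fin 3) (Fin 3) R) = AV q p r := by
  ext i j
  fin_cases i <;> fin_cases j <;>
    simp [Matrix.mul_apply, Fin.sum_univ_three, Matrix.vecHead, Matrix.vecTail] <;> simp [AV]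

lemma AV_mul_Mc1 : AV p q r * (!![0,1,0; 0,0,1; 1,0,0] : Matrix (Fin 3) (Fin 3) R) = AV q r p := by
  ext i j
  fin_cases i <;> fin_cases j <;>
    simp [Matrix.mul_apply, Fin.sum_univ_three, Matrix.vecHead, Matrix.vecTail] <;> simp [AV]

lemma AV_mul_Mc2 : AV p q r * (!![0,0,1; 1,0,0; 0,1,0] : Matrix (Fin 3) (Fin 3) R) = AV r p q := by
  ext i j
  fin_cases i <;> fin_cases j <;>
    simp [Matrix.mul_apply, Fin.sum_univ_three, Matrix.vecHead, Matrix.vecTail] <;> simp [AV]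

end PermCases

lemma glue_aux {K : Type*} [CommRing K] (σ : K →+* K) (F : MvPolynomial (Fin 3) K)
    (A B Mx : Matrix (Fin 3) (Fin 3) K) (hBA : B * A = 1) (hAB : A * B = 1)
    (hσF : map σ F = linSub Mx F) (hσA : A.map σ = A * Mx) :
    map σ (linSub B F) = linSub B F := by
  have h1 : A.map σ * B.map σ = 1 := by
    rw [← Matrix.map_mul, hAB, Matrix.map_one _ σ.map_zero σ.map_one]
  have h2 : Mx * B.map σ = B := by
    calc Mx * B.map ⇑σ = (B * A) * (Mx * B.map ⇑σ) := by rw [hBA, one_mul]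
    _ = B * ((A * Mx) * B.map ⇑σ) := by rw [mul_assoc, mul_assoc]
    _ = B * (A.map ⇑σ * B.map ⇑σ) := by rw [hσA]
    _ = B := by rw [h1, mul_one]
  rw [map_linSub, hσF, linSub_linSub, h2]

end AuxST6

lemma integral_aux (L : Subfield ℂ) (x y z : ℂ) (h1 : x * y * z ∈ L)
    (h2 : x ^ 2 + y ^ 2 + z ^ 2 ∈ L) (h3 : x ^ 4 + y ^ 4 + z ^ 4 ∈ L) :
    IsIntegral L x := by
  have h2L : (2 : ℂ) ∈ L := by
    have := L.add_mem L.one_mem L.one_mem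
    norm_num at this
    simpa using this
  have h2' : x ^ 2 * y ^ 2 + x ^ 2 * z ^ 2 + y ^ 2 * z ^ 2 ∈ L := by
    have he : x ^ 2 * y ^ 2 + x ^ 2 * z ^ 2 + y ^ 2 * z ^ 2
        = ((x ^ 2 + y ^ 2 + z ^ 2) ^ 2 - (x ^ 4 + y ^ 4 + z ^ 4)) / 2 := by ring
    rw [he]
    exact L.div_mem (L.sub_mem (L.pow_mem h2 2) h3) h2L
  have h1' : x ^ 2 * y ^ 2 * z ^ 2 ∈ L := by
    have he : x ^ 2 * y ^ 2 * z ^ 2 = (x * y * z) ^ 2 := by ring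
    rw [he]; exact L.pow_mem h1 2
  refine ⟨Polynomial.X ^ 6 - Polynomial.C (⟨_, h2⟩ : L) * Polynomial.X ^ 4
      + Polynomial.C (⟨_, h2'⟩ : L) * Polynomial.X ^ 2 - Polynomial.C (⟨_, h1'⟩ : L), ?_, ?_⟩
  · monicity!
  · have hmap : ∀ (w : ℂ) (hw : w ∈ L), algebraMap L ℂ ⟨w, hw⟩ = w := fun _ _ => rfl
    simp only [Polynomial.eval₂_sub, Polynomial.eval₂_add, Polynomial.eval₂_mul,
      Polynomial.eval₂_pow, Polynomial.eval₂_X, Polynomial.eval₂_C, hmap]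
    ring

-- general composition lemma for projAction
lemma projAction_projAction (U V : GL (Fin 3) ℂ)
    (h : (U : Matrix (Fin 3) (Fin 3) ℂ) * (V : Matrix (Fin 3) (Fin 3) ℂ) = 1)
    (p : Projectivization ℂ (Fin 3 → ℂ)) : projAction U (projAction V p) = p := by
  have hnz : (V : Matrix (Fin 3) (Fin 3) ℂ) *ᵥ p.rep ≠ 0 := by
    intro hz
    apply p.rep_nonzero
    have h2 := congrArg (fun w => (U : Matrix (Fin 3) (Fin 3) ℂ) *ᵥ w) hz
    simp only [Matrix.mulVec_mulVec, h] at h2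
    simpa using h2
  obtain ⟨u, hu⟩ := Projectivization.exists_smul_eq_mk_rep ℂ
    ((V : Matrix (Fin 3) (Fin 3) ℂ) *ᵥ p.rep) hnz
  have hrep : (projAction V p).rep = u • ((V : Matrix (Fin 3) (Fin 3) ℂ) *ᵥ p.rep) := hu.symm
  have key : (U : Matrix (Fin 3) (Fin 3) ℂ) *ᵥ (projAction V p).rep = u • p.rep := by
    rw [hrep, Matrix.mulVec_smul, Matrix.mulVec_mulVec, h, Matrix.one_mulVec]
  exact ((Projectivization.mk_eq_mk_iff ℂ _ _ _ p.rep_nonzero).mpr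
    ⟨u, key.symm⟩).trans (Projectivization.mk_rep p)

set_option maxHeartbeats 2000000 in
set_option synthInstance.maxHeartbeats 400000 in
/-- let `N = ℚ(a,b,c)` and `L = ℚ(j₁,j₂,j₃)`.  If `i ∈ N`, `N/L` is Galois, and
every automorphism of `N` fixing `L` pointwise permutes `a,b,c`, then `X_{a,b,c}` is mapped by
some `A ∈ GL₃(N)` onto the zero locus of a homogeneous quartic with coefficients in `L`. -/
theorem statement_6 (a b c : ℂ)
    (hab : a ^ 2 ≠ b ^ 2) (hac : a ^ 2 ≠ c ^ 2) (hbc : b ^ 2 ≠ c ^ 2)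
    (hsm : IsSmoothPlaneCurve (quarticF a b c))
    (N L : Subfield ℂ)
    (hN : N = Subfield.closure {a, b, c})
    (hL : L = Subfield.closure
      {a * b * c, a ^ 2 + b ^ 2 + c ^ 2, a ^ 4 + b ^ 4 + c ^ 4})
    (ha : a ∈ N) (hb : b ∈ N) (hc : c ∈ N)
    (hiN : Complex.I ∈ N) (hLN : L ≤ N)
    (hGal : @IsGalois L _ N _ (Subfield.inclusion hLN).toAlgebra)
    (hperm : ∀ σ : N ≃+* N, (∀ x : N, (x : ℂ) ∈ L → σ x = x) →
      ∃ e : Equiv.Perm (Fin 3),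
        ![(σ ⟨a, ha⟩ : ℂ), (σ ⟨b, hb⟩ : ℂ), (σ ⟨c, hc⟩ : ℂ)] = ![a, b, c] ∘ e) :
    ∃ Q : MvPolynomial (Fin 3) ℂ, Q.IsHomogeneous 4 ∧
      (∀ m : Fin 3 →₀ ℕ, Q.coeff m ∈ L) ∧
      ∃ A : GL (Fin 3) ℂ, (∀ i j : Fin 3, (A : Matrix (Fin 3) (Fin 3) ℂ) i j ∈ N) ∧
        MapsOnto A (zeroLocus (quarticF a b c)) (zeroLocus Q) := by
  classical
  have hab' : a ≠ b := fun h => hab (by rw [h])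
  have hac' : a ≠ c := fun h => hac (by rw [h])
  have hbc' : b ≠ c := fun h => hbc (by rw [h])
  set aN : N := ⟨a, ha⟩ with haN
  set bN : N := ⟨b, hb⟩ with hbN
  set cN : N := ⟨c, hc⟩ with hcN
  have nab : aN ≠ bN := fun h => hab' (congrArg Subtype.val h)
  have nac : aN ≠ cN := fun h => hac' (congrArg Subtype.val h)
  have nbc : bN ≠ cN := fun h => hbc' (congrArg Subtype.val h)
  set A : Matrix (Fin 3) (Fin 3) N := AV aN bN cN with hAdef
  have hdet : IsUnit A.det := by
    have hd : A.det = (aN - bN) * (bN - cN) * (aN - cN) := by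
      rw [hAdef, Matrix.det_fin_three]
      simp [AV, Matrix.vecHead, Matrix.vecTail]
      ring
    rw [hd]
    exact isUnit_iff_ne_zero.mpr (mul_ne_zero (mul_ne_zero (sub_ne_zero.mpr nab)
      (sub_ne_zero.mpr nbc)) (sub_ne_zero.mpr nac))
  set B : Matrix (Fin 3) (Fin 3) N := A⁻¹ with hBdef
  have hAB : A * B = 1 := Matrix.mul_nonsing_inv A hdet
  have hBA : B * A = 1 := Matrix.nonsing_inv_mul A hdet
  set FN : MvPolynomial (Fin 3) N := FF aN bN cN with hFN
  set QN : MvPolynomial (Fin 3) N := linSub B FN with hQNdef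
  -- Galois invariance of QN
  have hfixQN : ∀ σ : N ≃+* N, (∀ x : N, (x : ℂ) ∈ L → σ x = x) →
      MvPolynomial.map (σ : N →+* N) QN = QN := by
    intro σ hσL
    obtain ⟨e, he⟩ := hperm σ hσL
    have h0 := congrFun he 0
    have h1 := congrFun he 1
    have h2 := congrFun he 2
    simp only [Matrix.cons_val_zero, Matrix.cons_val_one, Matrix.head_cons,
      Matrix.cons_val_two, Matrix.tail_cons, Function.comp_apply] at h0 h1 h2
    have tri : ∀ x : Fin 3, x = 0 ∨ x = 1 ∨ x = 2 := by decide
    have getv : ∀ (x : N) (k : Fin 3), ((x : ℂ) = ![a, b, c] k) →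
        (x = aN ∨ x = bN ∨ x = cN) := by
      intro x k hk
      rcases tri k with h | h | h <;> rw [h] at hk
      · exact Or.inl (Subtype.ext (by simpa [haN] using hk))
      · exact Or.inr (Or.inl (Subtype.ext (by simpa [hbN] using hk)))
      · exact Or.inr (Or.inr (Subtype.ext (by simpa [hcN] using hk)))
    have hcoe : ∀ x : N, (σ : N →+* N) x = σ x := fun _ => rfl
    have Ha := getv _ _ h0
    have Hb := getv _ _ h1
    have Hc := getv _ _ h2
    rcases Ha with h1' | h1' | h1' <;> rcases Hb with h2' | h2' | h2' <;>
      rcases Hc with h3' | h3' | h3' <;>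
      first
        | exact absurd (σ.injective (h1'.trans h2'.symm)) nab
        | exact absurd (σ.injective (h1'.trans h3'.symm)) nac
        | exact absurd (σ.injective (h2'.trans h3'.symm)) nbc
        | skip
    -- 6 cases remain, lexicographic: (a,b,c),(a,c,b),(b,a,c),(b,c,a),(c,a,b),(c,b,a)
    · refine glue_aux _ FN A B !![1,0,0; 0,1,0; 0,0,1] hBA hAB ?_ ?_
      · rw [hFN, map_FF]
        simp only [hcoe, h1', h2', h3']
        exact (linSub_Mid aN bN cN).symm
      · rw [hAdef, map_AV]
        simp only [hcoe, h1', h2', h3']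
        exact (AV_mul_Mid aN bN cN).symm
    · refine glue_aux _ FN A B !![0,1,0; 1,0,0; 0,0,1] hBA hAB ?_ ?_
      · rw [hFN, map_FF]
        simp only [hcoe, h1', h2', h3']
        exact (linSub_M01 aN bN cN).symm
      · rw [hAdef, map_AV]
        simp only [hcoe, h1', h2', h3']
        exact (AV_mul_M01 aN bN cN).symm
    · refine glue_aux _ FN A B !![1,0,0; 0,0,1; 0,1,0] hBA hAB ?_ ?_
      · rw [hFN, map_FF]
        simp only [hcoe, h1', h2', h3']
        exact (linSub_M12 aN bN cN).symm
      · rw [hAdef, map_AV]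
        simp only [hcoe, h1', h2', h3']
        exact (AV_mul_M12 aN bN cN).symm
    · refine glue_aux _ FN A B !![0,1,0; 0,0,1; 1,0,0] hBA hAB ?_ ?_
      · rw [hFN, map_FF]
        simp only [hcoe, h1', h2', h3']
        exact (linSub_Mc1 aN bN cN).symm
      · rw [hAdef, map_AV]
        simp only [hcoe, h1', h2', h3']
        exact (AV_mul_Mc1 aN bN cN).symm
    · refine glue_aux _ FN A B !![0,0,1; 1,0,0; 0,1,0] hBA hAB ?_ ?_
      · rw [hFN, map_FF]
        simp only [hcoe, h1', h2', h3']
        exact (linSub_Mc2 aN bN cN).symm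
      · rw [hAdef, map_AV]
        simp only [hcoe, h1', h2', h3']
        exact (AV_mul_Mc2 aN bN cN).symm
    · refine glue_aux _ FN A B !![0,0,1; 0,1,0; 1,0,0] hBA hAB ?_ ?_
      · rw [hFN, map_FF]
        simp only [hcoe, h1', h2', h3']
        exact (linSub_M02 aN bN cN).symm
      · rw [hAdef, map_AV]
        simp only [hcoe, h1', h2', h3']
        exact (AV_mul_M02 aN bN cN).symm
  -- set up Galois theory
  letI : Algebra L N := (Subfield.inclusion hLN).toAlgebra
  haveI hGal' : IsGalois L N := hGal
  have hj1 : a * b * c ∈ L := by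
    rw [hL]; exact Subfield.subset_closure (by simp)
  have hj2 : a ^ 2 + b ^ 2 + c ^ 2 ∈ L := by
    rw [hL]; exact Subfield.subset_closure (by simp)
  have hj3 : a ^ 4 + b ^ 4 + c ^ 4 ∈ L := by
    rw [hL]; exact Subfield.subset_closure (by simp)
  haveI hFD : FiniteDimensional L N := by
    have hIntS : ∀ x ∈ ({a, b, c} : Set ℂ), IsIntegral L x := by
      intro x hx
      simp only [Set.mem_insert_iff, Set.mem_singleton_iff] at hx
      rcases hx with rfl | rfl | rfl
      · exact integral_aux L x b c hj1 hj2 hj3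
      · exact integral_aux L x a c (by rwa [show a * x * c = x * a * c by ring] at hj1)
          (by rwa [show a ^ 2 + x ^ 2 + c ^ 2 = x ^ 2 + a ^ 2 + c ^ 2 by ring] at hj2)
          (by rwa [show a ^ 4 + x ^ 4 + c ^ 4 = x ^ 4 + a ^ 4 + c ^ 4 by ring] at hj3)
      · exact integral_aux L x a b (by rwa [show a * b * x = x * a * b by ring] at hj1)
          (by rwa [show a ^ 2 + b ^ 2 + x ^ 2 = x ^ 2 + a ^ 2 + b ^ 2 by ring] at hj2)
          (by rwa [show a ^ 4 + b ^ 4 + x ^ 4 = x ^ 4 + a ^ 4 + b ^ 4 by ring] at hj3)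
    haveI : Finite ({a, b, c} : Set ℂ) := Set.toFinite _
    haveI hFDM : FiniteDimensional L (IntermediateField.adjoin L ({a, b, c} : Set ℂ)) :=
      IntermediateField.finiteDimensional_adjoin hIntS
    have hNle : N ≤ (IntermediateField.adjoin L ({a, b, c} : Set ℂ)).toSubfield := by
      rw [hN]
      apply Subfield.closure_le.mpr
      intro x hx
      exact IntermediateField.subset_adjoin L _ hx
    let f : N →ₗ[L] (IntermediateField.adjoin L ({a, b, c} : Set ℂ)) :=
      { toFun := fun x => ⟨(x : ℂ), hNle x.2⟩
        map_add' := fun x y => rfl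
        map_smul' := fun l x => rfl }
    refine FiniteDimensional.of_injective f (fun x y h => ?_)
    apply Subtype.ext
    have hval := congrArg Subtype.val h
    exact hval
  -- coefficients of QN are fixed, hence in L
  have hcoeffL : ∀ m : Fin 3 →₀ ℕ, ((QN.coeff m : N) : ℂ) ∈ L := by
    intro m
    have hfixed : ∀ τ : N ≃ₐ[L] N, τ (QN.coeff m) = QN.coeff m := by
      intro τ
      have hσL : ∀ x : N, (x : ℂ) ∈ L → τ.toRingEquiv x = x := by
        intro x hx
        have hxe : x = algebraMap L N ⟨(x : ℂ), hx⟩ := Subtype.ext rfl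
        rw [hxe]
        exact τ.commutes _
      have hmap := hfixQN τ.toRingEquiv hσL
      have hstep : (MvPolynomial.map ((τ.toRingEquiv : N ≃+* N) : N →+* N) QN).coeff m
          = ((τ.toRingEquiv : N ≃+* N) : N →+* N) (QN.coeff m) :=
        coeff_map ((τ.toRingEquiv : N ≃+* N) : N →+* N) QN m
      rw [hmap] at hstep
      exact hstep.symm
    have hbot : QN.coeff m ∈ (⊥ : IntermediateField L N) := by
      have hFe : IntermediateField.fixedField (⊤ : Subgroup (N ≃ₐ[L] N)) = ⊥ :=
        ((IsGalois.tfae (F := ↥L) (E := ↥N)).out 0 1).mp hGal'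
      rw [← hFe]
      exact fun g => hfixed g.1
    rcases IntermediateField.mem_bot.mp hbot with ⟨l, hl⟩
    have hlv : ((QN.coeff m : N) : ℂ) = (l : ℂ) := by rw [← hl]; rfl
    rw [hlv]
    exact l.2
  -- move to ℂ
  set Ac : Matrix (Fin 3) (Fin 3) ℂ := A.map (N.subtype) with hAc
  set Bc : Matrix (Fin 3) (Fin 3) ℂ := B.map (N.subtype) with hBc
  have hABc : Ac * Bc = 1 := by
    rw [hAc, hBc, ← Matrix.map_mul, hAB, Matrix.map_one _ (map_zero _) (map_one _)]
  have hBAc : Bc * Ac = 1 := by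
    rw [hAc, hBc, ← Matrix.map_mul, hBA, Matrix.map_one _ (map_zero _) (map_one _)]
  set Agl : GL (Fin 3) ℂ := ⟨Ac, Bc, hABc, hBAc⟩ with hAgl
  set Agl' : GL (Fin 3) ℂ := ⟨Bc, Ac, hBAc, hABc⟩ with hAgl'
  set Q : MvPolynomial (Fin 3) ℂ := MvPolynomial.map (N.subtype) QN with hQdef
  have hFq : quarticF a b c = FF a b c := rfl
  have hQ : Q = linSub Bc (quarticF a b c) := by
    rw [hQdef, hQNdef, map_linSub, hFN, map_FF, hFq]
    rfl
  have hFhom : (quarticF a b c).IsHomogeneous 4 := by rw [hFq]; exact FF_isHomogeneous a b c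
  have hQhom : Q.IsHomogeneous 4 := by rw [hQ]; exact linSub_isHomogeneous hFhom
  have hQev : ∀ v : Fin 3 → ℂ, eval v Q = eval (Bc *ᵥ v) (quarticF a b c) := by
    intro v; rw [hQ, eval_linSub]
  have hAglcoe : (Agl : Matrix (Fin 3) (Fin 3) ℂ) = Ac := rfl
  have hAglcoe' : (Agl' : Matrix (Fin 3) (Fin 3) ℂ) = Bc := rfl
  have hcomp : ∀ p, projAction Agl (projAction Agl' p) = p :=
    projAction_projAction Agl Agl' (by rw [hAglcoe, hAglcoe', hABc])
  have hcomp' : ∀ p, projAction Agl' (projAction Agl p) = p :=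
    projAction_projAction Agl' Agl (by rw [hAglcoe, hAglcoe', hBAc])
  refine ⟨Q, hQhom, ?_, ⟨Agl, ?_, ?_, ?_, ?_⟩⟩
  · intro m
    rw [hQdef, coeff_map]
    exact hcoeffL m
  · intro i j
    rw [hAglcoe, hAc, Matrix.map_apply]
    exact (A i j).2
  · -- MapsTo
    intro p hp
    have hp' : eval p.rep (quarticF a b c) = 0 := hp
    have hnz : (Agl : Matrix (Fin 3) (Fin 3) ℂ) *ᵥ p.rep ≠ 0 := by
      intro hz
      apply p.rep_nonzero
      have h2 := congrArg (fun w => Bc *ᵥ w) hz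
      simp only [Matrix.mulVec_mulVec, hAglcoe, hBAc] at h2
      simpa using h2
    obtain ⟨u, hu⟩ := Projectivization.exists_smul_eq_mk_rep ℂ
      ((Agl : Matrix (Fin 3) (Fin 3) ℂ) *ᵥ p.rep) hnz
    have hrep : (projAction Agl p).rep
        = u • ((Agl : Matrix (Fin 3) (Fin 3) ℂ) *ᵥ p.rep) := hu.symm
    show eval (projAction Agl p).rep Q = 0
    rw [hrep, Units.smul_def, eval_smul_of_isHomogeneous hQhom, hQev,
      Matrix.mulVec_mulVec, hAglcoe, hBAc, Matrix.one_mulVec, hp', mul_zero]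
  · -- InjOn
    intro x _ y _ hxy
    have := congrArg (projAction Agl') hxy
    rwa [hcomp' x, hcomp' y] at this
  · -- SurjOn
    intro p hp
    have hp' : eval p.rep Q = 0 := hp
    refine ⟨projAction Agl' p, ?_, hcomp p⟩
    have hnz : (Agl' : Matrix (Fin 3) (Fin 3) ℂ) *ᵥ p.rep ≠ 0 := by
      intro hz
      apply p.rep_nonzero
      have h2 := congrArg (fun w => Ac *ᵥ w) hz
      simp only [Matrix.mulVec_mulVec, hAglcoe', hABc] at h2
      simpa using h2
    obtain ⟨u, hu⟩ := Projectivization.exists_smul_eq_mk_rep ℂ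
      ((Agl' : Matrix (Fin 3) (Fin 3) ℂ) *ᵥ p.rep) hnz
    have hrep : (projAction Agl' p).rep
        = u • ((Agl' : Matrix (Fin 3) (Fin 3) ℂ) *ᵥ p.rep) := hu.symm
    show eval (projAction Agl' p).rep (quarticF a b c) = 0
    rw [hrep, Units.smul_def, eval_smul_of_isHomogeneous hFhom, hAglcoe', ← hQev,
      hp', mul_zero]

end
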